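/- Let θ be an A-symmetry in Aut N. Then θ α θ⁻¹ = α⁻¹ for every IA-automorphism α of N. -/

import Mathlib

/-!
Setting: `X` is an infinite set, `F` the free group on `X`, and
`N X = F/γ₃(F)` the free nilpotent group of class two on `X`.
-/

namespace FreeNilp

/-- The free nilpotent group of class two on `X`:  `F/γ₃(F)`, where
`γ₃(F) = [[F,F],F]` is the third term of the lower central series of `F`. -/
abbrev N (X : Type*) := FreeGroup X ⧸ (⊤ : Subgroup (FreeGroup X)).lowerCentralSeries 2

/-- The image in `N X` of the generator `x ∈ X`. -/
def xb {X : Type*} (x : X) : N X := QuotientGroup.mk (FreeGroup.of x)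

/-- The group of inner automorphisms `Inn G`, as a subgroup of `MulAut G`;
`MulAut.conj z` is the inner automorphism `τ_z : a ↦ z a z⁻¹`. -/
def Inn (G : Type*) [Group G] : Subgroup (MulAut G) := (MulAut.conj (G := G)).range

instance Inn.normal (G : Type*) [Group G] : (Inn G).Normal := by
  constructor
  rintro m ⟨z, rfl⟩ g
  refine ⟨g z, ?_⟩
  ext a
  simp [MulAut.conj_apply, map_mul, map_inv, mul_assoc]

/-- The outer automorphism group `Out G = Aut G / Inn G`. -/
abbrev Out (G : Type*) [Group G] := MulAut G ⧸ Inn G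

/-- The quotient homomorphism `ĥ : Aut G → Out G`. -/
def hhat (G : Type*) [Group G] : MulAut G →* Out G := QuotientGroup.mk' (Inn G)

/-- IA-automorphisms: automorphisms inducing the identity on the abelianization. -/
def IA {G : Type*} [Group G] (α : MulAut G) : Prop :=
  ∀ g : G, Abelianization.of (α g) = Abelianization.of g

/-- A-symmetries in `Aut G`: automorphisms inducing the inversion automorphism
`-id : a ↦ a⁻¹` of the abelianization. -/
def ASym {G : Type*} [Group G] (θ : MulAut G) : Prop :=
  ∀ g : G, Abelianization.of (θ g) = (Abelianization.of g)⁻¹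

/-- A-symmetries in `Out G`: elements induced by A-symmetries of `Aut G`
(equivalently, inducing inversion on the abelianization). -/
def ASymO {G : Type*} [Group G] (t : Out G) : Prop :=
  ∃ θ : MulAut G, hhat G θ = t ∧ ASym θ

/-- The endomorphism of the abelianization induced by an automorphism of `G`. -/
def abMap {G : Type*} [Group G] (σ : MulAut G) : Abelianization G →* Abelianization G :=
  Abelianization.map σ.toMonoidHom

/-- `S` is a free generating set (a "ℤ-basis", written multiplicatively) of the abelian
group `H`:  `S` generates `H`, and every `ℤ`-valued function on `S` extends to a
homomorphism `H → ℤ` (the universal property of a free abelian group with basis `S`). -/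
def IsFreeAbelianBasisOf {G : Type*} [Group G] (S : Set G) (H : Subgroup G) : Prop :=
  Subgroup.closure S = H ∧
    ∀ g : G → ℤ, ∃ φ : H →* Multiplicative ℤ,
      ∀ s, s ∈ S → ∀ h : s ∈ H, φ ⟨s, h⟩ = Multiplicative.ofAdd (g s)

/-- `σ : Aut (N X)` induces an extremal involution of the abelianization `A`:
for some free generating set `{a} ∪ C` of `A` the induced map sends `a` to `a⁻¹`
and fixes `C` pointwise. -/
def AExtremal {G : Type*} [Group G] (σ : MulAut G) : Prop :=
  ∃ (a : Abelianization G) (C : Set (Abelianization G)),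
    a ∉ C ∧ IsFreeAbelianBasisOf (insert a C) ⊤ ∧
      abMap σ a = a⁻¹ ∧ ∀ c ∈ C, abMap σ c = c

/-- A basis (free generating set) of `N X`: the image of the canonical generating set
`{x̄ : x ∈ X}` under an automorphism of `N X`. -/
def IsBasisN {X : Type*} (B : Set (N X)) : Prop :=
  ∃ e : MulAut (N X), B = ⇑e '' Set.range (xb : X → N X)

/-- Extremal involutions in `Aut (N X)`: automorphisms inverting one element of some
basis of `N X` and fixing all the other elements of that basis. -/
def IsExtremalAut {X : Type*} (ψ : MulAut (N X)) : Prop :=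
  ∃ B : Set (N X), IsBasisN B ∧
    ∃ b₀ ∈ B, ψ b₀ = b₀⁻¹ ∧ ∀ b ∈ B, b ≠ b₀ → ψ b = b

/-- The subgroup `G_b = {s ∈ Out (N X) : s̄(b̄N') = b̄N'}` of `Out (N X)`, as a set:
outer automorphisms whose induced automorphism of the abelianization fixes the image
of the generator `b`. -/
def Gb {X : Type*} (b : X) : Set (Out (N X)) :=
  {s | ∀ σ : MulAut (N X), hhat (N X) σ = s →
    Abelianization.of (σ (xb b)) = Abelianization.of (xb b)}

end FreeNilp

open FreeNilp
open scoped commutatorElement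

section Helpers
variable {X : Type*}

private lemma ab_eq_one_iff {G : Type*} [Group G] (x : G) :
    Abelianization.of x = 1 ↔ x ∈ commutator G :=
  QuotientGroup.eq_one_iff x

private lemma comm_mem_center (a b : N X) : ⁅a, b⁆ ∈ Subgroup.center (N X) := by
  rw [Subgroup.mem_center_iff]
  intro g
  obtain ⟨x, rfl⟩ := QuotientGroup.mk_surjective a
  obtain ⟨y, rfl⟩ := QuotientGroup.mk_surjective b
  obtain ⟨z, rfl⟩ := QuotientGroup.mk_surjective g
  have h : ⁅⁅x, y⁆, z⁆ ∈ (⊤ : Subgroup (FreeGroup X)).lowerCentralSeries 2 := by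
    rw [show (2:ℕ) = 1 + 1 from rfl, Subgroup.lowerCentralSeries_succ]
    refine Subgroup.commutator_mem_commutator ?_ (Subgroup.mem_top _)
    rw [show (1:ℕ) = 0 + 1 from rfl, Subgroup.lowerCentralSeries_succ]
    exact Subgroup.commutator_mem_commutator (Subgroup.mem_top _) (Subgroup.mem_top _)
  have h1 : (QuotientGroup.mk ⁅⁅x,y⁆,z⁆ : N X) = 1 := (QuotientGroup.eq_one_iff _).2 h
  set π : FreeGroup X →* N X := QuotientGroup.mk' ((⊤ : Subgroup (FreeGroup X)).lowerCentralSeries 2) with hπ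
  have h2 : ⁅⁅π x, π y⁆, π z⁆ = 1 := by
    rw [← map_commutatorElement, ← map_commutatorElement]
    exact h1
  exact (commutatorElement_eq_one_iff_commute.mp h2).symm.eq

private lemma commutator_le_center' : commutator (N X) ≤ Subgroup.center (N X) := by
  rw [commutator_eq_closure, Subgroup.closure_le]
  rintro x ⟨p, q, rfl⟩
  exact comm_mem_center p q

private lemma conj_central {G : Type*} [Group G] {z : G} (hz : z ∈ Subgroup.center G) (g : G) :
    g * z * g⁻¹ = z := by
  rw [Subgroup.mem_center_iff.mp hz g, mul_inv_cancel_right]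

private lemma comm_mul_central {G : Type*} [Group G] {u v : G}
    (hu : u ∈ Subgroup.center G) (hv : v ∈ Subgroup.center G) (a b : G) :
    ⁅a * u, b * v⁆ = ⁅a, b⁆ := by
  have h1 : u * (b * v) * u⁻¹ = b * v := by
    rw [← Subgroup.mem_center_iff.mp hu (b * v), mul_inv_cancel_right]
  have h2 : v * a⁻¹ * v⁻¹ = a⁻¹ := by
    rw [← Subgroup.mem_center_iff.mp hv a⁻¹, mul_inv_cancel_right]
  calc ⁅a * u, b * v⁆ = a * (u * (b * v) * u⁻¹) * a⁻¹ * (b * v)⁻¹ := by group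
    _ = a * (b * v) * a⁻¹ * (b * v)⁻¹ := by rw [h1]
    _ = a * b * (v * a⁻¹ * v⁻¹) * b⁻¹ := by group
    _ = ⁅a, b⁆ := by rw [h2]; group

private lemma comm_inv_inv (a b : N X) : ⁅a⁻¹, b⁻¹⁆ = ⁅a, b⁆ := by
  have h := conj_central (comm_mem_center a b) (a * b)⁻¹
  calc ⁅a⁻¹, b⁻¹⁆ = (a * b)⁻¹ * ⁅a, b⁆ * ((a * b)⁻¹)⁻¹ := by group
    _ = ⁅a, b⁆ := h

/-- An automorphism fixing all basic commutators fixes the commutator subgroup pointwise. -/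
private lemma fix_comm {σ : MulAut (N X)} (hgen : ∀ a b : N X, σ ⁅a, b⁆ = ⁅a, b⁆) :
    ∀ z ∈ commutator (N X), σ z = z := by
  intro z hz
  rw [commutator_eq_closure] at hz
  refine Subgroup.closure_induction ?_ (map_one σ) ?_ ?_ hz
  · rintro x ⟨p, q, rfl⟩
    exact hgen p q
  · intro x y _ _ hx hy
    rw [map_mul, hx, hy]
  · intro x _ hx
    rw [map_inv, hx]

private lemma IA_fix {α : MulAut (N X)} (hα : IA α) :
    ∀ z ∈ commutator (N X), α z = z := by
  refine fix_comm fun a b => ?_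
  have ha : a⁻¹ * α a ∈ Subgroup.center (N X) := by
    refine commutator_le_center' ((ab_eq_one_iff _).1 ?_)
    rw [map_mul, map_inv, hα, inv_mul_cancel]
  have hb : b⁻¹ * α b ∈ Subgroup.center (N X) := by
    refine commutator_le_center' ((ab_eq_one_iff _).1 ?_)
    rw [map_mul, map_inv, hα, inv_mul_cancel]
  calc α ⁅a, b⁆ = ⁅α a, α b⁆ := map_commutatorElement α a b
    _ = ⁅a * (a⁻¹ * α a), b * (b⁻¹ * α b)⁆ := by rw [mul_inv_cancel_left, mul_inv_cancel_left]
    _ = ⁅a, b⁆ := comm_mul_central ha hb a b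

private lemma ASym_fix {θ : MulAut (N X)} (hθ : ASym θ) :
    ∀ z ∈ commutator (N X), θ z = z := by
  refine fix_comm fun a b => ?_
  have ha : a * θ a ∈ Subgroup.center (N X) := by
    refine commutator_le_center' ((ab_eq_one_iff _).1 ?_)
    rw [map_mul, hθ, mul_inv_cancel]
  have hb : b * θ b ∈ Subgroup.center (N X) := by
    refine commutator_le_center' ((ab_eq_one_iff _).1 ?_)
    rw [map_mul, hθ, mul_inv_cancel]
  calc θ ⁅a, b⁆ = ⁅θ a, θ b⁆ := map_commutatorElement θ a b
    _ = ⁅a⁻¹ * (a * θ a), b⁻¹ * (b * θ b)⁆ := by rw [inv_mul_cancel_left, inv_mul_cancel_left]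
    _ = ⁅a⁻¹, b⁻¹⁆ := comm_mul_central ha hb a⁻¹ b⁻¹
    _ = ⁅a, b⁆ := comm_inv_inv a b

end Helpers


/-- If `θ` is an A-symmetry in `Aut N`, then `θ α θ⁻¹ = α⁻¹` for every
IA-automorphism `α` of `N`. -/
theorem stmt5 (X : Type*) [Infinite X] (θ : MulAut (N X)) (hθ : ASym θ)
    (α : MulAut (N X)) (hα : IA α) : θ * α * θ⁻¹ = α⁻¹ := by
  have hcmem : ∀ g : N X, g⁻¹ * α g ∈ commutator (N X) := by
    intro g
    rw [← ab_eq_one_iff, map_mul, map_inv, hα, inv_mul_cancel]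
  have hccen : ∀ g : N X, g⁻¹ * α g ∈ Subgroup.center (N X) :=
    fun g => commutator_le_center' (hcmem g)
  have hαfix := IA_fix hα
  have hθfix := ASym_fix hθ
  ext g
  show θ (α (θ⁻¹ g)) = α⁻¹ g
  have hθinv : (θ⁻¹ : MulAut (N X)) = θ.symm := rfl
  have hαinv : (α⁻¹ : MulAut (N X)) = α.symm := rfl
  rw [hθinv, hαinv]
  -- α⁻¹ g = g * (g⁻¹ * α g)⁻¹
  have hAinv : α.symm g = g * (g⁻¹ * α g)⁻¹ := by
    rw [MulEquiv.symm_apply_eq, map_mul, map_inv, hαfix _ (hcmem g)]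
    group
  -- d := g * θ.symm g is in the commutator subgroup
  have hdmem : g * θ.symm g ∈ commutator (N X) := by
    rw [← ab_eq_one_iff, map_mul]
    have := hθ (θ.symm g)
    rw [MulEquiv.apply_symm_apply] at this
    rw [this, inv_mul_cancel]
  have hdcen : g * θ.symm g ∈ Subgroup.center (N X) := commutator_le_center' hdmem
  set c := g⁻¹ * α g with hc
  set d := g * θ.symm g with hd
  have hsg : θ.symm g = g⁻¹ * d := by rw [hd, inv_mul_cancel_left]
  -- compute c (θ.symm g) = c⁻¹
  have key : (θ.symm g)⁻¹ * α (θ.symm g) = c⁻¹ := by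
    rw [hsg, map_mul, map_inv, hαfix _ hdmem]
    have hαg : α g = g * c := by rw [hc, mul_inv_cancel_left]
    rw [hαg]
    calc (g⁻¹ * d)⁻¹ * ((g * c)⁻¹ * d)
        = d⁻¹ * (g * c⁻¹ * g⁻¹) * d := by group
      _ = d⁻¹ * c⁻¹ * d := by
          rw [conj_central (Subgroup.inv_mem _ (hccen g)) g]
      _ = c⁻¹ * d⁻¹ * d := by
          rw [← Subgroup.mem_center_iff.mp (Subgroup.inv_mem _ (hccen g)) d⁻¹]
      _ = c⁻¹ := by group
  have hαsg : α (θ.symm g) = θ.symm g * c⁻¹ := by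
    rw [← key, mul_inv_cancel_left]
  rw [hαsg, map_mul, MulEquiv.apply_symm_apply, hθfix _ (Subgroup.inv_mem _ (hcmem g)), hAinv, hc]
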